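/- The group PSL_2(Z) is isomorphic to the free product Z/2 * Z/3. -/

import Mathlib

open Matrix MatrixGroups ModularGroup

local notation "SL2Z" => Matrix.SpecialLinearGroup (Fin 2) ℤ

/-- The irrational reals. -/
abbrev IrrReal := {x : ℝ // Irrational x}

namespace PSL2ZAux

lemma moebius_den_ne_zero (g : SL2Z) (x : IrrReal) :
    (g 1 0 : ℝ) * x.1 + (g 1 1 : ℝ) ≠ 0 := by
  have hdet : g 0 0 * g 1 1 - g 0 1 * g 1 0 = 1 := by
    have := g.2; rwa [Matrix.det_fin_two] at this
  intro h
  rcases eq_or_ne (g 1 0) 0 with hc | hc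
  · have hd : (g 1 1 : ℤ) = 0 := by
      have : ((g 1 1 : ℤ) : ℝ) = 0 := by simpa [hc] using h
      exact_mod_cast this
    rw [hc, hd] at hdet; simp at hdet
  · apply x.2
    refine ⟨(-(g 1 1) : ℚ) / ((g 1 0 : ℚ)), ?_⟩
    have hc' : ((g 1 0 : ℤ) : ℝ) ≠ 0 := by exact_mod_cast hc
    push_cast
    field_simp
    linarith [h]

lemma moebius_irrational (g : SL2Z) (x : IrrReal) :
    Irrational (((g 0 0 : ℝ) * x.1 + (g 0 1 : ℝ)) / ((g 1 0 : ℝ) * x.1 + (g 1 1 : ℝ))) := by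
  have hdet : g 0 0 * g 1 1 - g 0 1 * g 1 0 = 1 := by
    have := g.2; rwa [Matrix.det_fin_two] at this
  have hden := moebius_den_ne_zero g x
  rintro ⟨q, hq⟩
  have key : ((g 0 0 : ℝ) * x.1 + g 0 1) = q * ((g 1 0 : ℝ) * x.1 + g 1 1) := by
    rw [eq_div_iff hden] at hq; linarith [hq]
  -- x * (a - q c) = q d - b
  have key2 : x.1 * ((g 0 0 : ℝ) - q * g 1 0) = q * g 1 1 - g 0 1 := by ring_nf; ring_nf at key; linarith
  rcases eq_or_ne ((g 0 0 : ℝ) - q * g 1 0) 0 with h0 | h0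
  · -- then a = q c and b = q d, so det = 0
    have hb : (g 0 1 : ℝ) = q * g 1 1 := by
      have := key2; rw [h0, mul_zero] at this; linarith
    have ha : (g 0 0 : ℝ) = q * g 1 0 := by linarith [h0]
    have h3 : ((g 0 0 : ℤ) * g 1 1 - g 0 1 * g 1 0 : ℝ) = 0 := by push_cast; rw [ha, hb]; ring
    have h4 : (g 0 0 : ℤ) * g 1 1 - g 0 1 * g 1 0 = 0 := by exact_mod_cast h3
    rw [hdet] at h4; norm_num at h4
  · apply x.2
    refine ⟨((q * g 1 1 - g 0 1) / (g 0 0 - q * g 1 0) : ℚ), ?_⟩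
    have : x.1 = ((q : ℝ) * g 1 1 - g 0 1) / ((g 0 0 : ℝ) - q * g 1 0) := by
      field_simp; linarith [key2]
    rw [this]; push_cast; ring

end PSL2ZAux

namespace PSL2ZAux

noncomputable instance : SMul SL2Z IrrReal :=
  ⟨fun g x => ⟨((g 0 0 : ℝ) * x.1 + (g 0 1 : ℝ)) / ((g 1 0 : ℝ) * x.1 + (g 1 1 : ℝ)),
    moebius_irrational g x⟩⟩

noncomputable instance : MulAction SL2Z IrrReal where
  one_smul x := by
    ext
    show ((((1:SL2Z) 0 0 : ℤ) : ℝ) * x.1 + ((1:SL2Z) 0 1 : ℤ)) / _ = x.1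
    simp [Matrix.SpecialLinearGroup.coe_one]
  mul_smul g h x := by
    have hdh := moebius_den_ne_zero h x
    ext
    show ((((g*h) 0 0 : ℤ) : ℝ) * x.1 + ((g*h) 0 1 : ℤ)) / ((((g*h) 1 0 : ℤ) : ℝ) * x.1 + ((g*h) 1 1 : ℤ))
       = _
    have hy := moebius_den_ne_zero g (h • x)
    have hxy : ((h • x : IrrReal) : ℝ)
        = ((h 0 0 : ℝ) * x.1 + (h 0 1 : ℝ)) / ((h 1 0 : ℝ) * x.1 + (h 1 1 : ℝ)) := rfl
    rw [hxy] at hy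
    have hgh : ∀ i j, ((g * h : SL2Z) i j : ℤ)
        = g i 0 * h 0 j + g i 1 * h 1 j := by
      intro i j
      show ((g * h : SL2Z) : Matrix (Fin 2) (Fin 2) ℤ) i j = _
      rw [Matrix.SpecialLinearGroup.coe_mul, Matrix.mul_apply, Fin.sum_univ_two]
    have h2 : (g • (h • x) : IrrReal).1
        = ((g 0 0 : ℝ) * ((h • x : IrrReal) : ℝ) + g 0 1) / ((g 1 0 : ℝ) * ((h • x : IrrReal) : ℝ) + g 1 1) := rfl
    have hdgh := moebius_den_ne_zero (g * h) x
    rw [hgh, hgh] at hdgh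
    rw [h2, hxy, hgh, hgh, hgh, hgh]
    push_cast at hdgh ⊢
    rw [div_eq_div_iff hdgh hy]
    field_simp
    ring

theorem smul_def (g : SL2Z) (x : IrrReal) :
    (g • x : IrrReal).1 = ((g 0 0 : ℝ) * x.1 + (g 0 1 : ℝ)) / ((g 1 0 : ℝ) * x.1 + (g 1 1 : ℝ)) := rfl

end PSL2ZAux


namespace PSL2ZAux

lemma coe_app (g : SL2Z) (i j : Fin 2) : g i j = (g : Matrix (Fin 2) (Fin 2) ℤ) i j := rfl

lemma gen_aux : ∀ n : ℕ, ∀ g : SL2Z, (g 1 0).natAbs = n →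
    g ∈ Subgroup.closure ({S, T} : Set SL2Z) := by
  intro n
  induction n using Nat.strong_induction_on with
  | _ n ih =>
    intro g hn
    have hS : S ∈ Subgroup.closure ({S, T} : Set SL2Z) :=
      Subgroup.subset_closure (by simp)
    have hT : T ∈ Subgroup.closure ({S, T} : Set SL2Z) :=
      Subgroup.subset_closure (by simp)
    have hdet : g 0 0 * g 1 1 - g 0 1 * g 1 0 = 1 := by
      have := g.2; rwa [Matrix.det_fin_two] at this
    rcases eq_or_ne (g 1 0) 0 with hc | hc
    · -- c = 0
      rw [hc, mul_zero, sub_zero] at hdet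
      rcases Int.eq_one_or_neg_one_of_mul_eq_one' hdet with ⟨ha, hd⟩ | ⟨ha, hd⟩
      · -- g = T ^ (g 0 1)
        have : g = T ^ (g 0 1) := by
          apply Subtype.coe_injective
          show (g : Matrix (Fin 2) (Fin 2) ℤ) = ((T ^ (g 0 1) : SL2Z) : Matrix (Fin 2) (Fin 2) ℤ)
          rw [coe_T_zpow]
          ext i j
          fin_cases i <;> fin_cases j <;>
            simp [ha, hd, hc, ← coe_app]
        rw [this]; exact Subgroup.zpow_mem _ hT _
      · have : g = S ^ 2 * T ^ (-(g 0 1)) := by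
          apply Subtype.coe_injective
          show (g : Matrix (Fin 2) (Fin 2) ℤ)
              = ((S ^ 2 * T ^ (-(g 0 1)) : SL2Z) : Matrix (Fin 2) (Fin 2) ℤ)
          have : ((S ^ 2 * T ^ (-(g 0 1)) : SL2Z) : Matrix (Fin 2) (Fin 2) ℤ)
              = S.1 ^ 2 * (T ^ (-(g 0 1))).1 := by
            simp [Matrix.SpecialLinearGroup.coe_mul, Matrix.SpecialLinearGroup.coe_pow]
          rw [this, coe_T_zpow, coe_S, pow_two, Matrix.mul_fin_two, Matrix.mul_fin_two]
          ext i j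
          fin_cases i <;> fin_cases j <;>
            simp [ha, hd, hc, ← coe_app]
        rw [this]
        exact Subgroup.mul_mem _ (Subgroup.pow_mem _ hS 2) (Subgroup.zpow_mem _ hT _)
    · -- c ≠ 0
      set c := g 1 0 with hcdef
      set q : ℤ := g 0 0 / c with hq
      set g' : SL2Z := S * T ^ (-q) * g with hg'
      have hentry : g' 1 0 = g 0 0 % c := by
        have h1 : (g' : Matrix (Fin 2) (Fin 2) ℤ) = S.1 * (T ^ (-q)).1 * g.1 := by
          simp [hg', Matrix.SpecialLinearGroup.coe_mul]
        rw [coe_app, h1, coe_S, coe_T_zpow]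
        rw [Matrix.mul_apply, Fin.sum_univ_two, Matrix.mul_apply, Fin.sum_univ_two,
            Matrix.mul_apply, Fin.sum_univ_two]
        simp [Matrix.cons_val_zero, Matrix.cons_val_one]
        rw [Int.emod_def]
        ring
      have hlt : (g' 1 0).natAbs < n := by
        rw [hentry]
        have h0 : 0 ≤ g 0 0 % c := Int.emod_nonneg _ hc
        have h1 : g 0 0 % c < |c| := Int.emod_lt_abs _ hc
        rw [← hn]
        rw [Int.abs_eq_natAbs] at h1
        omega
      have hg'mem := ih _ hlt g' rfl
      have : g = T ^ q * S⁻¹ * g' := by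
        rw [hg']; group
      rw [this]
      exact Subgroup.mul_mem _ (Subgroup.mul_mem _ (Subgroup.zpow_mem _ hT q)
        (Subgroup.inv_mem _ hS)) hg'mem

end PSL2ZAux

namespace PSL2ZAux

lemma closure_ST : Subgroup.closure ({S, T} : Set SL2Z) = ⊤ := by
  rw [eq_top_iff]
  intro g _
  exact gen_aux _ g rfl

local notation "PSL2Z" =>
  Matrix.SpecialLinearGroup (Fin 2) ℤ ⧸ Subgroup.center (Matrix.SpecialLinearGroup (Fin 2) ℤ)

def π : SL2Z →* PSL2Z := QuotientGroup.mk' _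

lemma neg_one_mem_center : (-1 : SL2Z) ∈ Subgroup.center SL2Z := by
  rw [Subgroup.mem_center_iff]
  intro g
  apply Subtype.coe_injective
  simp [Matrix.SpecialLinearGroup.coe_mul]

lemma π_neg_one : π (-1 : SL2Z) = 1 := by
  rw [π, QuotientGroup.mk'_apply, QuotientGroup.eq_one_iff]
  exact neg_one_mem_center

lemma S_sq : (S : SL2Z) ^ 2 = -1 := by
  apply Subtype.coe_injective
  show (S.1 ^ 2 : Matrix (Fin 2) (Fin 2) ℤ) = _
  rw [pow_two, coe_S, Matrix.mul_fin_two]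
  norm_num
  ext i j
  fin_cases i <;> fin_cases j <;> simp

lemma TS_cube : ((T * S : SL2Z)) ^ 3 = -1 := by
  apply Subtype.coe_injective
  show ((T.1 * S.1) ^ 3 : Matrix (Fin 2) (Fin 2) ℤ) = _
  rw [coe_T, coe_S, pow_succ, pow_two, Matrix.mul_fin_two, Matrix.mul_fin_two, Matrix.mul_fin_two]
  norm_num
  ext i j
  fin_cases i <;> fin_cases j <;> simp

lemma a_sq : (π S) ^ 2 = 1 := by
  rw [← map_pow, S_sq, π_neg_one]

lemma b_cube : (π (T * S)) ^ 3 = 1 := by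
  rw [← map_pow, TS_cube, π_neg_one]

/-- The homomorphism `ℤ/2 → PSL₂(ℤ)` sending the generator to `S`. -/
noncomputable def fA : Multiplicative (ZMod 2) →* PSL2Z :=
  AddMonoidHom.toMultiplicativeLeft
    (ZMod.lift 2 ⟨zmultiplesHom (Additive PSL2Z) (Additive.ofMul (π S)), by
      simpa [zmultiplesHom, ← ofMul_zpow, ← ofMul_mul] using congrArg Additive.ofMul a_sq⟩)

noncomputable def fB : Multiplicative (ZMod 3) →* PSL2Z :=
  AddMonoidHom.toMultiplicativeLeft
    (ZMod.lift 3 ⟨zmultiplesHom (Additive PSL2Z) (Additive.ofMul (π (T * S))), by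
      simpa [zmultiplesHom, ← ofMul_zpow, ← ofMul_mul] using congrArg Additive.ofMul b_cube⟩)

lemma fA_one : fA (Multiplicative.ofAdd (1 : ZMod 2)) = π S := by
  have : ((1 : ℤ) : ZMod 2) = 1 := by norm_num
  rw [fA, AddMonoidHom.coe_toMultiplicativeLeft]
  show Additive.toMul ((ZMod.lift 2 _ : ZMod 2 →+ Additive PSL2Z) (Multiplicative.toAdd (Multiplicative.ofAdd (1 : ZMod 2)))) = π S
  rw [toAdd_ofAdd, ← this, ZMod.lift_coe]
  simp [zmultiplesHom]

lemma fB_one : fB (Multiplicative.ofAdd (1 : ZMod 3)) = π (T * S) := by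
  have : ((1 : ℤ) : ZMod 3) = 1 := by norm_num
  rw [fB, AddMonoidHom.coe_toMultiplicativeLeft]
  show Additive.toMul ((ZMod.lift 3 _ : ZMod 3 →+ Additive PSL2Z) (Multiplicative.toAdd (Multiplicative.ofAdd (1 : ZMod 3)))) = π (T * S)
  rw [toAdd_ofAdd, ← this, ZMod.lift_coe]
  simp [zmultiplesHom]

end PSL2ZAux

namespace PSL2ZAux

local notation "PSL2Z" =>
  Matrix.SpecialLinearGroup (Fin 2) ℤ ⧸ Subgroup.center (Matrix.SpecialLinearGroup (Fin 2) ℤ)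

lemma center_smul_eq (g : SL2Z) (hg : g ∈ Subgroup.center SL2Z) (x : IrrReal) : g • x = x := by
  obtain ⟨r, hr2, hr⟩ := Matrix.SpecialLinearGroup.mem_center_iff.mp hg
  have hr' : r = 1 ∨ r = -1 := by
    have : r ^ 2 = 1 := by simpa using hr2
    rcases Int.isUnit_iff.mp (IsUnit.of_mul_eq_one (a := r) r (by linear_combination this)) with h | h
    · exact Or.inl h
    · exact Or.inr h
  have hentry : ∀ i j : Fin 2, (g i j : ℤ) = if i = j then r else 0 := by
    intro i j
    rw [coe_app, ← hr]
    rw [Matrix.scalar_apply, Matrix.diagonal_apply]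
  have hrne : (r : ℝ) ≠ 0 := by rcases hr' with h | h <;> rw [h] <;> norm_num
  ext
  rw [smul_def, hentry 0 0, hentry 0 1, hentry 1 0, hentry 1 1]
  simp only [if_pos rfl, if_neg (by decide : (0 : Fin 2) ≠ 1), if_neg (by decide : (1 : Fin 2) ≠ 0)]
  push_cast
  field_simp
  rw [add_zero, mul_zero, zero_add, mul_div_cancel_left₀ _ hrne]

/-- The action of `PSL₂(ℤ)` on the irrational reals. -/
noncomputable def pslPerm : PSL2Z →* Equiv.Perm IrrReal :=
  QuotientGroup.lift _ (MulAction.toPermHom SL2Z IrrReal) (by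
    intro g hg
    ext x
    show ((MulAction.toPermHom SL2Z IrrReal) g x : IrrReal).1 = x.1
    rw [MulAction.toPermHom_apply, MulAction.toPerm_apply, center_smul_eq g hg x])

noncomputable instance : MulAction PSL2Z IrrReal := MulAction.compHom _ pslPerm

lemma psl_smul (g : SL2Z) (x : IrrReal) : (π g) • x = g • x := rfl

end PSL2ZAux

namespace PSL2ZAux

local notation "PSL2Z" =>
  Matrix.SpecialLinearGroup (Fin 2) ℤ ⧸ Subgroup.center (Matrix.SpecialLinearGroup (Fin 2) ℤ)

lemma S_entries : (S 0 0 : ℤ) = 0 ∧ (S 0 1 : ℤ) = -1 ∧ (S 1 0 : ℤ) = 1 ∧ (S 1 1 : ℤ) = 0 := by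
  refine ⟨?_, ?_, ?_, ?_⟩ <;> rw [coe_app, coe_S] <;> simp

lemma TS_entries : ((T * S : SL2Z) 0 0 : ℤ) = 1 ∧ ((T * S : SL2Z) 0 1 : ℤ) = -1 ∧
    ((T * S : SL2Z) 1 0 : ℤ) = 1 ∧ ((T * S : SL2Z) 1 1 : ℤ) = 0 := by
  have h : ((T * S : SL2Z) : Matrix (Fin 2) (Fin 2) ℤ) = !![1, -1; 1, 0] := by
    rw [Matrix.SpecialLinearGroup.coe_mul, coe_T, coe_S, Matrix.mul_fin_two]
    norm_num
  refine ⟨?_, ?_, ?_, ?_⟩ <;> rw [coe_app, h] <;> simp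

lemma S_smul_val (x : IrrReal) : ((π S • x : IrrReal) : ℝ) = -1 / x.1 := by
  obtain ⟨h1, h2, h3, h4⟩ := S_entries
  rw [psl_smul, smul_def, h1, h2, h3, h4]
  push_cast
  ring

lemma TS_smul_val (x : IrrReal) : ((π (T * S) • x : IrrReal) : ℝ) = (x.1 - 1) / x.1 := by
  obtain ⟨h1, h2, h3, h4⟩ := TS_entries
  rw [psl_smul, smul_def, h1, h2, h3, h4]
  push_cast
  ring_nf

lemma x_ne_zero (x : IrrReal) : x.1 ≠ 0 := fun h => by
  have := x.2; rw [h] at this; exact this ⟨0, by norm_num⟩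

lemma S_maps (x : IrrReal) (hx : 0 < x.1) : ((π S • x : IrrReal) : ℝ) < 0 := by
  rw [S_smul_val]
  exact div_neg_of_neg_of_pos (by norm_num) hx

lemma TS_maps (x : IrrReal) (hx : x.1 < 0) : 0 < ((π (T * S) • x : IrrReal) : ℝ) := by
  rw [TS_smul_val]
  exact div_pos_of_neg_of_neg (by linarith) hx

lemma TS_sq_maps (x : IrrReal) (hx : x.1 < 0) :
    0 < (((π (T * S)) ^ 2 • x : IrrReal) : ℝ) := by
  rw [pow_two, mul_smul, TS_smul_val]
  have hy : ((π (T * S) • x : IrrReal) : ℝ) = (x.1 - 1) / x.1 := TS_smul_val x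
  rw [hy]
  have hxne := x_ne_zero x
  have h1 : (1 : ℝ) < (x.1 - 1) / x.1 := by
    rw [lt_div_iff_of_neg hx]
    linarith
  have h0 : (0 : ℝ) < (x.1 - 1) / x.1 := by linarith
  exact div_pos (by linarith) h0

/-- The index family for the free product. -/
def Hfam : Bool → Type := fun b => cond b (Multiplicative (ZMod 3)) (Multiplicative (ZMod 2))

instance : ∀ b, Group (Hfam b) := fun b => by
  cases b
  · exact (inferInstance : Group (Multiplicative (ZMod 2)))
  · exact (inferInstance : Group (Multiplicative (ZMod 3)))

noncomputable def ffam : ∀ b, Hfam b →* PSL2Z := fun b => by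
  cases b
  · exact fA
  · exact fB

def Xfam : Bool → Set IrrReal := fun b => cond b {x | 0 < x.1} {x | x.1 < 0}

lemma lift_ffam_injective : Function.Injective (Monoid.CoprodI.lift ffam) := by
  apply Monoid.CoprodI.lift_injective_of_ping_pong ffam ?_ Xfam ?_ ?_ ?_
  · refine Or.inr ⟨true, ?_⟩
    show (3 : Cardinal) ≤ Cardinal.mk (Multiplicative (ZMod 3))
    rw [Cardinal.mk_fintype]
    norm_num
  · intro b
    cases b
    · refine ⟨⟨-Real.sqrt 2, (irrational_sqrt_two).neg⟩, ?_⟩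
      show -Real.sqrt 2 < 0
      have : (0:ℝ) < Real.sqrt 2 := by positivity
      linarith
    · refine ⟨⟨Real.sqrt 2, irrational_sqrt_two⟩, ?_⟩
      show 0 < Real.sqrt 2
      positivity
  · intro i j hij
    have key : ∀ x : IrrReal, x ∈ Xfam false → x ∈ Xfam true → False := by
      intro x hx hx'
      have h1 : x.1 < 0 := hx
      have h2 : 0 < x.1 := hx'
      linarith
    show Disjoint (Xfam i) (Xfam j)
    cases i <;> cases j
    · exact absurd rfl hij
    · rw [Set.disjoint_left]; intro x hx hx'; exact key x hx hx'
    · rw [Set.disjoint_left]; intro x hx hx'; exact key x hx' hx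
    · exact absurd rfl hij
  · intro i j hij
    cases i
    · -- i = false : C2, sends positives to negatives
      intro h hne
      have hdec : ∀ h : Multiplicative (ZMod 2), h ≠ 1 → h = Multiplicative.ofAdd 1 := by decide
      have hh : h = Multiplicative.ofAdd (1 : ZMod 2) := hdec h hne
      subst hh
      rintro y ⟨x, hx, rfl⟩
      cases j
      · exact absurd rfl hij
      · show (((ffam false) (Multiplicative.ofAdd (1 : ZMod 2)) • x : IrrReal) : ℝ) < 0
        show (((fA (Multiplicative.ofAdd (1 : ZMod 2))) • x : IrrReal) : ℝ) < 0
        rw [fA_one]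
        exact S_maps x hx
    · -- i = true : C3
      intro h hne
      have hdec : ∀ h : Multiplicative (ZMod 3), h ≠ 1 →
          h = Multiplicative.ofAdd 1 ∨ h = Multiplicative.ofAdd 2 := by decide
      have hh : h = Multiplicative.ofAdd (1 : ZMod 3) ∨ h = Multiplicative.ofAdd (2 : ZMod 3) :=
        hdec h hne
      rintro y ⟨x, hx, rfl⟩
      cases j
      · have hx' : x.1 < 0 := hx
        show (0 : ℝ) < (((ffam true) h • x : IrrReal) : ℝ)
        show (0 : ℝ) < (((fB h) • x : IrrReal) : ℝ)
        rcases hh with hh | hh <;> subst hh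
        · rw [fB_one]; exact TS_maps x hx'
        · have : fB (Multiplicative.ofAdd (2 : ZMod 3)) = (π (T * S)) ^ 2 := by
            have h2 : Multiplicative.ofAdd (2 : ZMod 3)
                = Multiplicative.ofAdd (1 : ZMod 3) * Multiplicative.ofAdd (1 : ZMod 3) := by decide
            rw [h2, _root_.map_mul, fB_one, pow_two]
          rw [this]
          exact TS_sq_maps x hx'
      · exact absurd rfl hij

end PSL2ZAux

namespace PSL2ZAux

local notation "PSL2Z" =>
  Matrix.SpecialLinearGroup (Fin 2) ℤ ⧸ Subgroup.center (Matrix.SpecialLinearGroup (Fin 2) ℤ)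

noncomputable def φ : Monoid.Coprod (Multiplicative (ZMod 2)) (Multiplicative (ZMod 3)) →* PSL2Z :=
  Monoid.Coprod.lift fA fB

noncomputable def ofFalse : Multiplicative (ZMod 2) →* Monoid.CoprodI Hfam :=
  Monoid.CoprodI.of (M := Hfam) (i := false)

noncomputable def ofTrue : Multiplicative (ZMod 3) →* Monoid.CoprodI Hfam :=
  Monoid.CoprodI.of (M := Hfam) (i := true)

noncomputable def eHom : Monoid.Coprod (Multiplicative (ZMod 2)) (Multiplicative (ZMod 3)) →*
    Monoid.CoprodI Hfam :=
  Monoid.Coprod.lift ofFalse ofTrue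

noncomputable def eInv : Monoid.CoprodI Hfam →*
    Monoid.Coprod (Multiplicative (ZMod 2)) (Multiplicative (ZMod 3)) :=
  Monoid.CoprodI.lift (fun b => by
    cases b
    · exact Monoid.Coprod.inl
    · exact Monoid.Coprod.inr)

lemma eInv_eHom : eInv.comp eHom = MonoidHom.id _ := by
  apply Monoid.Coprod.hom_ext
  · refine MonoidHom.ext fun x => ?_
    show eInv (eHom (Monoid.Coprod.inl x)) = Monoid.Coprod.inl x
    rw [eHom, Monoid.Coprod.lift_apply_inl]
    exact Monoid.CoprodI.lift_of _ _
  · refine MonoidHom.ext fun x => ?_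
    show eInv (eHom (Monoid.Coprod.inr x)) = Monoid.Coprod.inr x
    rw [eHom, Monoid.Coprod.lift_apply_inr]
    exact Monoid.CoprodI.lift_of _ _

lemma eHom_injective : Function.Injective eHom := by
  intro x y hxy
  have := congrArg eInv hxy
  have h1 := congrFun (congrArg (fun f => f.toFun) eInv_eHom)
  simpa [MonoidHom.comp_apply] using (h1 x).symm.trans ((congrArg eInv hxy).trans (h1 y))

lemma φ_eq : φ = (Monoid.CoprodI.lift ffam).comp eHom := by
  apply Monoid.Coprod.hom_ext
  · refine MonoidHom.ext fun x => ?_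
    show φ (Monoid.Coprod.inl x) = Monoid.CoprodI.lift ffam (eHom (Monoid.Coprod.inl x))
    rw [φ, Monoid.Coprod.lift_apply_inl, eHom, Monoid.Coprod.lift_apply_inl, ofFalse]
    exact (Monoid.CoprodI.lift_of ffam (i := false) x).symm
  · refine MonoidHom.ext fun x => ?_
    show φ (Monoid.Coprod.inr x) = Monoid.CoprodI.lift ffam (eHom (Monoid.Coprod.inr x))
    rw [φ, Monoid.Coprod.lift_apply_inr, eHom, Monoid.Coprod.lift_apply_inr, ofTrue]
    exact (Monoid.CoprodI.lift_of ffam (i := true) x).symm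

lemma φ_injective : Function.Injective φ := by
  rw [φ_eq]
  exact fun x y h => eHom_injective (lift_ffam_injective h)

lemma φ_surjective : Function.Surjective φ := by
  rw [← MonoidHom.range_eq_top, eq_top_iff]
  have hclosure : Subgroup.closure ({π S, π T} : Set PSL2Z) = ⊤ := by
    have hmap : Subgroup.map π ⊤ = ⊤ :=
      Subgroup.map_top_of_surjective π (QuotientGroup.mk'_surjective _)
    rw [← closure_ST, MonoidHom.map_closure, Set.image_insert_eq, Set.image_singleton] at hmap
    exact hmap
  rw [← hclosure, Subgroup.closure_le]
  have hS : π S ∈ φ.range := ⟨Monoid.Coprod.inl (Multiplicative.ofAdd (1 : ZMod 2)), by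
    rw [φ, Monoid.Coprod.lift_apply_inl, fA_one]⟩
  have hTS : π (T * S) ∈ φ.range := ⟨Monoid.Coprod.inr (Multiplicative.ofAdd (1 : ZMod 3)), by
    rw [φ, Monoid.Coprod.lift_apply_inr, fB_one]⟩
  have hT : π T ∈ φ.range := by
    have : π T = π (T * S) * (π S)⁻¹ := by rw [_root_.map_mul]; group
    rw [this]
    exact Subgroup.mul_mem _ hTS (Subgroup.inv_mem _ hS)
  rintro x (rfl | rfl)
  · exact hS
  · exact hT

end PSL2ZAux

/-- `PSL₂(ℤ)`, i.e. the quotient of `SL₂(ℤ)` by its center `{±I}`, is isomorphic to the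
free product `ℤ/2 ∗ ℤ/3`. -/
theorem psl2z_iso_coprod :
    Nonempty
      ((Matrix.SpecialLinearGroup (Fin 2) ℤ ⧸
          Subgroup.center (Matrix.SpecialLinearGroup (Fin 2) ℤ)) ≃*
        Monoid.Coprod (Multiplicative (ZMod 2)) (Multiplicative (ZMod 3))) := by
  exact ⟨(MulEquiv.ofBijective PSL2ZAux.φ
    ⟨PSL2ZAux.φ_injective, PSL2ZAux.φ_surjective⟩).symm⟩
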